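/- Uniqueness theorem: let F ∈ B_c(T) and suppose all Fourier coefficients of f = F′ vanish, i.e. (−1)^n F(π) + i n ∫_{−π}^{π} F(t) e^{−int} dt = 0 for every n ∈ ℤ. Then F is identically zero (equivalently, f = 0). -/

import Mathlib

open MeasureTheory Real AddCircle

section aux

variable {T : ℝ} [hT : Fact (0 < T)]

lemma my_cont_integrable {f : AddCircle T → ℂ} (hf : Continuous f) :
    Integrable f haarAddCircle :=
  hf.integrable_of_hasCompactSupport (IsClosed.isCompact (isClosed_tsupport f))

lemma my_integral_fourier_zero {n : ℤ} (hn : n ≠ 0) :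
    ∫ t : AddCircle T, fourier n t ∂haarAddCircle = 0 :=
  integral_eq_zero_of_add_right_eq_neg (μ := haarAddCircle)
    (fourier_add_half_inv_index hn hT.out)

lemma my_fourierCoeff_const (c : ℂ) (n : ℤ) :
    fourierCoeff (fun _ : AddCircle T => c) n = if n = 0 then c else 0 := by
  unfold fourierCoeff
  split_ifs with h
  · subst h
    have : ∀ t : AddCircle T, fourier (-(0:ℤ)) t • c = c := fun t => by
      rw [neg_zero, fourier_zero]; simp
    simp_rw [this]
    simp [measure_univ]
  · have h' : (-n : ℤ) ≠ 0 := by simpa using h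
    simp_rw [smul_eq_mul]
    rw [MeasureTheory.integral_mul_const, my_integral_fourier_zero h', zero_mul]

lemma my_continuous_eq_zero (g : C(AddCircle T, ℂ))
    (hg : ∀ n : ℤ, fourierCoeff (⇑g) n = 0) : ∀ x, g x = 0 := by
  have h1 : ContinuousMap.toLp (E := ℂ) 2 haarAddCircle ℂ g = 0 := by
    rw [← (fourierBasis (T := T)).repr.map_eq_zero_iff]
    ext n
    rw [fourierBasis_repr, fourierCoeff_toLp, hg n]
    simp
  have h2 : g = 0 := ContinuousMap.toLp_injective (E := ℂ) (𝕜 := ℂ) (p := 2) haarAddCircle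
    (by rw [h1, map_zero])
  intro x
  rw [h2]; rfl

end aux

theorem fourier_coeff_all_zero_implies_zero (F : ℝ → ℂ)
    (hFcont : Continuous F) (hF0 : F (-π) = 0)
    (hFper : ∀ x : ℝ, F (x + 2 * π) = F x + F π)
    (hcoef : ∀ n : ℤ, (-1 : ℂ) ^ n * F π + Complex.I * (n : ℂ) *
        (∫ t in (-π)..π, F t * Complex.exp (-Complex.I * (n : ℂ) * (t : ℂ))) = 0) :
    ∀ x : ℝ, F x = 0 := by
  haveI : Fact (0 < 2 * π) := ⟨by positivity⟩
  have hFpi : F π = 0 := by simpa using hcoef 0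
  have hper : Function.Periodic F (2 * π) := fun x => by rw [hFper x, hFpi, add_zero]
  have hint : ∀ n : ℤ, n ≠ 0 →
      (∫ t in (-π)..π, F t * Complex.exp (-Complex.I * (n : ℂ) * (t : ℂ))) = 0 := by
    intro n hn
    have h := hcoef n
    rw [hFpi, mul_zero, zero_add] at h
    have hIn : Complex.I * (n : ℂ) ≠ 0 :=
      mul_ne_zero Complex.I_ne_zero (Int.cast_ne_zero.mpr hn)
    exact (mul_eq_zero.mp h).resolve_left hIn
  set g : AddCircle (2 * π) → ℂ := hper.lift with hgdef
  have hgcoe : ∀ x : ℝ, g (x : AddCircle (2 * π)) = F x := fun x => rfl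
  have hgcont : Continuous g := by
    rw [hgdef]
    exact hFcont.quotient_liftOn' _
  have hgcoeff : ∀ n : ℤ, n ≠ 0 → fourierCoeff g n = 0 := by
    intro n hn
    rw [fourierCoeff_eq_intervalIntegral g n (-π)]
    have hlim : -π + 2 * π = π := by ring
    rw [hlim]
    have key : ∀ x : ℝ, (fourier (-n) (x : AddCircle (2 * π))) • g (x : AddCircle (2 * π))
        = F x * Complex.exp (-Complex.I * (n : ℂ) * (x : ℂ)) := by
      intro x
      rw [hgcoe, fourier_coe_apply, smul_eq_mul, mul_comm]
      have hpi : (π : ℂ) ≠ 0 := Complex.ofReal_ne_zero.mpr Real.pi_ne_zero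
      have h2 : ((2 * π : ℝ) : ℂ) ≠ 0 := by push_cast; exact mul_ne_zero two_ne_zero hpi
      have harg : 2 * (π : ℂ) * Complex.I * ((-n : ℤ) : ℂ) * (x : ℂ) / ((2 * π : ℝ) : ℂ)
          = -Complex.I * (n : ℂ) * (x : ℂ) := by
        rw [div_eq_iff h2]
        push_cast
        ring
      rw [harg]
    rw [intervalIntegral.integral_congr (fun x _ => key x), hint n hn, smul_zero]
  set c : ℂ := fourierCoeff g 0 with hc
  set h : C(AddCircle (2 * π), ℂ) :=
    ⟨fun z => g z - c, hgcont.sub continuous_const⟩ with hhdef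
  have hsplit : ∀ n : ℤ, fourierCoeff (⇑h) n
      = fourierCoeff g n - fourierCoeff (fun _ : AddCircle (2 * π) => c) n := by
    intro n
    unfold fourierCoeff
    have : ∀ t : AddCircle (2 * π), fourier (-n) t • h t
        = fourier (-n) t • g t - fourier (-n) t • c := fun t => by
      show fourier (-n) t • (g t - c) = _
      rw [smul_sub]
    simp_rw [this]
    rw [integral_sub (f := fun t => fourier (-n) t • g t) (g := fun t => fourier (-n) t • c)
      (my_cont_integrable ((map_continuous (fourier (-n))).smul hgcont))
      (my_cont_integrable ((map_continuous (fourier (-n))).smul continuous_const))]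
  have hcoeffh : ∀ n : ℤ, fourierCoeff (⇑h) n = 0 := by
    intro n
    rw [hsplit n, my_fourierCoeff_const]
    by_cases hn : n = 0
    · subst hn; simp [hc]
    · rw [if_neg hn, hgcoeff n hn, sub_zero]
  have hzero := my_continuous_eq_zero h hcoeffh
  have hgc : ∀ z, g z = c := fun z => by
    have := hzero z
    simpa [hhdef, sub_eq_zero] using this
  have hc0 : c = 0 := by
    have := hgc ((-π : ℝ) : AddCircle (2 * π))
    rw [hgcoe, hF0] at this
    exact this.symm
  intro x
  rw [← hgcoe x, hgc, hc0]
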